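/- If α:[0,1]→ℝ^d is absolutely continuous and φ:[0,1]→[0,1] is monotonic, absolutely continuous, and surjective, then the reparametrized curve α∘φ is absolutely continuous and produces the same measure: μ_{α∘φ} = μ_α. -/

import Mathlib

open MeasureTheory Set
open scoped RealInnerProductSpace ENNReal NNReal

noncomputable section

/-- Euclidean space `ℝ^d`. -/
abbrev Euc (d : ℕ) : Type := EuclideanSpace ℝ (Fin d)

/-- The unit sphere `S^{d-1}` in `ℝ^d`. -/
abbrev Sph (d : ℕ) : Type := Metric.sphere (0 : Euc d) 1

/-- The antipodal equivalence relation on the sphere. -/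
def projRel (d : ℕ) : Setoid (Sph d) where
  r x y := (x : Euc d) = (y : Euc d) ∨ (x : Euc d) = -(y : Euc d)
  iseqv := by
    refine ⟨fun x => Or.inl rfl, ?_, ?_⟩
    · rintro x y (h | h)
      · exact Or.inl h.symm
      · exact Or.inr (by rw [h, neg_neg])
    · rintro x y z (h1 | h1) (h2 | h2)
      · exact Or.inl (h1.trans h2)
      · exact Or.inr (h1.trans h2)
      · exact Or.inr (by rw [h1, h2])
      · exact Or.inl (by rw [h1, h2, neg_neg])

/-- Real projective space `P^{d-1}`, as the quotient of the sphere identifying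
antipodal points. -/
abbrev Proj (d : ℕ) : Type := Quotient (projRel d)

/-- The projection `π : S^{d-1} → P^{d-1}`. -/
def projQ {d : ℕ} (x : Sph d) : Proj d := Quotient.mk (projRel d) x

/-- The unit vector in the direction of a nonzero vector `v`. -/
def unitize {d : ℕ} (v : Euc d) (hv : v ≠ 0) : Sph d :=
  ⟨‖v‖⁻¹ • v, by
    rw [mem_sphere_zero_iff_norm, norm_smul, norm_inv, norm_norm,
      inv_mul_cancel₀ (norm_ne_zero_iff.mpr hv)]⟩

/-- The degree-1 homogeneous extension `f̂ : ℝ^d → ℝ` of a function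
`f : P^{d-1} → ℝ`, determined by `f̂(rξ) = |r| f(π ξ)` for `ξ` on the sphere. -/
def hext {d : ℕ} (f : Proj d → ℝ) (v : Euc d) : ℝ :=
  haveI := Classical.propDecidable (v = 0)
  if hv : v = 0 then 0 else ‖v‖ * f (projQ (unitize v hv))

section HextLemmas
variable {d : ℕ}

lemma hext_zero (f : Proj d → ℝ) : hext f 0 = 0 := by simp [hext]

lemma hext_ne (f : Proj d → ℝ) (v : Euc d) (hv : v ≠ 0) :
    hext f v = ‖v‖ * f (projQ (unitize v hv)) := by
  classical
  simp only [hext]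
  rw [dif_neg hv]

lemma hext_smul (f : Proj d → ℝ) (r : ℝ) (v : Euc d) :
    hext f (r • v) = |r| * hext f v := by
  rcases eq_or_ne v 0 with rfl | hv
  · simp [hext_zero]
  rcases eq_or_ne r 0 with rfl | hr
  · simp [hext_zero]
  have hrv : r • v ≠ 0 := smul_ne_zero hr hv
  rw [hext_ne f _ hrv, hext_ne f v hv]
  have hnorm : ‖r • v‖ = |r| * ‖v‖ := by rw [norm_smul, Real.norm_eq_abs]
  have hq : projQ (unitize (r • v) hrv) = projQ (unitize v hv) := by
    apply Quotient.sound
    have hkey : (r * ‖v‖)⁻¹ * r = ‖v‖⁻¹ := by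
      rw [mul_inv, mul_comm r⁻¹, mul_assoc, inv_mul_cancel₀ hr, mul_one]
    rcases lt_or_gt_of_ne hr with h | h
    · right
      show ‖r • v‖⁻¹ • (r • v) = -(‖v‖⁻¹ • v)
      rw [hnorm, smul_smul, ← neg_smul]
      congr 1
      rw [abs_of_neg h, neg_mul, inv_neg, neg_mul, hkey]
    · left
      show ‖r • v‖⁻¹ • (r • v) = ‖v‖⁻¹ • v
      rw [hnorm, smul_smul]
      congr 1
      rw [abs_of_pos h, hkey]
  rw [hq, hnorm]
  ring

lemma continuous_projQ {d : ℕ} : Continuous (projQ : Sph d → Proj d) :=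
  continuous_quotient_mk'

lemma exists_bound (f : Proj d → ℝ) (hf : Continuous f) :
    ∃ C : ℝ, 0 ≤ C ∧ ∀ p : Proj d, |f p| ≤ C := by
  have hc : Continuous (fun x : Sph d => f (projQ x)) := hf.comp continuous_projQ
  have hcomp : IsCompact (range (fun x : Sph d => f (projQ x))) := isCompact_range hc
  obtain ⟨C, hC⟩ := hcomp.isBounded.exists_norm_le
  refine ⟨max C 0, le_max_right _ _, fun p => ?_⟩
  obtain ⟨x, rfl⟩ := Quotient.exists_rep p
  have : |f (projQ x)| ≤ C := by
    simpa [Real.norm_eq_abs] using hC _ (mem_range_self x)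
  exact this.trans (le_max_left _ _)

lemma hext_bound (f : Proj d → ℝ) {C : ℝ} (hC0 : 0 ≤ C) (hC : ∀ p : Proj d, |f p| ≤ C)
    (v : Euc d) : |hext f v| ≤ C * ‖v‖ := by
  rcases eq_or_ne v 0 with rfl | hv
  · simp [hext_zero]
  · rw [hext_ne f v hv, abs_mul, abs_norm, mul_comm]
    exact mul_le_mul_of_nonneg_right (hC _) (norm_nonneg v)

lemma continuous_hext (f : Proj d → ℝ) (hf : Continuous f) : Continuous (hext f) := by
  obtain ⟨C, hC0, hC⟩ := exists_bound f hf
  rw [continuous_iff_continuousAt]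
  intro v₀
  rcases eq_or_ne v₀ 0 with rfl | hv₀
  · have h1 : Filter.Tendsto (hext f) (nhds 0) (nhds 0) := by
      apply squeeze_zero_norm (fun v => by
        simpa [Real.norm_eq_abs] using hext_bound f hC0 hC v)
      have : Filter.Tendsto (fun v : Euc d => C * ‖v‖) (nhds 0) (nhds (C * ‖(0 : Euc d)‖)) :=
        (continuous_const.mul continuous_norm).tendsto 0
      simpa using this
    simpa [ContinuousAt, hext_zero] using h1
  · have hco : ContinuousOn (hext f) {v : Euc d | v ≠ 0} := by
      rw [continuousOn_iff_continuous_restrict]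
      have hcont : Continuous (fun v : {v : Euc d // v ≠ 0} =>
          ‖(v : Euc d)‖ * f (projQ (unitize (v : Euc d) v.2))) := by
        apply Continuous.mul
        · exact continuous_subtype_val.norm
        · have h1 : Continuous (fun v : {v : Euc d // v ≠ 0} =>
              (‖(v : Euc d)‖⁻¹ • (v : Euc d) : Euc d)) := by
            apply Continuous.fun_smul
            · exact (continuous_subtype_val.norm).inv₀
                (fun v => norm_ne_zero_iff.mpr v.2)
            · exact continuous_subtype_val
          have h2 : Continuous (fun v : {v : Euc d // v ≠ 0} =>
              unitize (v : Euc d) v.2) := h1.subtype_mk _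
          exact hf.comp (continuous_projQ.comp h2)
      exact hcont.congr (fun v => (hext_ne f _ v.2).symm)
    exact hco.continuousAt ((isOpen_compl_singleton).mem_nhds hv₀)

end HextLemmas

section ProjMeas
variable {d : ℕ}

/-- The quadratic embedding of the sphere. -/
def sphEmb (d : ℕ) : Sph d → (Fin d → Fin d → ℝ) :=
  fun x i j => (x : Euc d) i * (x : Euc d) j

lemma sphEmb_rel {x y : Sph d} (h : (projRel d).r x y) : sphEmb d x = sphEmb d y := by
  rcases h with h | h
  · unfold sphEmb; rw [h]
  · funext i j
    show (x : Euc d) i * (x : Euc d) j = (y : Euc d) i * (y : Euc d) j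
    rw [h]
    simp only [PiLp.neg_apply]
    ring

/-- The induced embedding of projective space. -/
def projEmb (d : ℕ) : Proj d → (Fin d → Fin d → ℝ) :=
  Quotient.lift (sphEmb d) (fun _ _ h => sphEmb_rel h)

lemma exists_coord_ne (x : Sph d) : ∃ i, (x : Euc d) i ≠ 0 := by
  by_contra hc
  push_neg at hc
  have hx0 : (x : Euc d) = 0 := by ext i; simpa using hc i
  have := x.2
  rw [mem_sphere_zero_iff_norm, hx0] at this
  simp at this

lemma sphEmb_eq_cases {x y : Sph d} (h : sphEmb d x = sphEmb d y) :
    (x : Euc d) = (y : Euc d) ∨ (x : Euc d) = -(y : Euc d) := by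
  obtain ⟨i, hi⟩ := exists_coord_ne x
  have hij : ∀ k l, (x : Euc d) k * (x : Euc d) l = (y : Euc d) k * (y : Euc d) l := by
    intro k l
    have := congrFun (congrFun h k) l
    exact this
  have hii := hij i i
  rcases mul_self_eq_mul_self_iff.1 hii with hyi | hyi
  · left
    ext j
    have hthis := hij i j
    rw [hyi] at hthis hi
    exact mul_left_cancel₀ hi hthis
  · right
    ext j
    show (x : Euc d) j = (-(y : Euc d)) j
    simp only [PiLp.neg_apply]
    have hthis := hij i j
    have hyi' : (y : Euc d) i = -((x : Euc d) i) := by rw [hyi]; ring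
    have h2 : (x : Euc d) i * (x : Euc d) j = (x : Euc d) i * (-((y : Euc d) j)) := by
      rw [hthis, hyi']; ring
    exact mul_left_cancel₀ hi h2

lemma projEmb_inj : Function.Injective (projEmb d) := by
  intro p q h
  induction p using Quotient.ind
  induction q using Quotient.ind
  exact Quotient.sound (sphEmb_eq_cases h)

lemma continuous_sphEmb : Continuous (sphEmb d) := by
  apply continuous_pi; intro i; apply continuous_pi; intro j
  exact ((EuclideanSpace.proj i).continuous.comp continuous_subtype_val).mul
    ((EuclideanSpace.proj j).continuous.comp continuous_subtype_val)

lemma continuous_projEmb : Continuous (projEmb d) :=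
  continuous_sphEmb.quotient_lift _

lemma measurable_of_continuous_proj {β : Type*} [MeasurableSpace β] [TopologicalSpace β]
    [BorelSpace β] {f : Proj d → β} (hf : Continuous f) : Measurable f := by
  rw [measurable_from_quotient]
  exact (hf.comp continuous_quotient_mk').measurable

lemma measurable_projEmb : Measurable (projEmb d) :=
  measurable_of_continuous_proj continuous_projEmb

/-- image of a measurable set of `Proj d` under `projEmb` is measurable (Lusin–Souslin). -/
lemma measurableSet_projEmb_image {s : Set (Proj d)} (hs : MeasurableSet s) :
    MeasurableSet (projEmb d '' s) := by
  have hpre : MeasurableSet (Quotient.mk'' ⁻¹' s : Set (Sph d)) := measurableSet_quotient.1 hs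
  set T : Set (Sph d) := Quotient.mk'' ⁻¹' s with hT
  have hsurj : Function.Surjective (Quotient.mk'' : Sph d → Proj d) :=
    fun q => ⟨Quotient.out q, Quotient.out_eq q⟩
  have himg : projEmb d '' s = sphEmb d '' T := by
    calc projEmb d '' s = projEmb d '' (Quotient.mk'' '' T) := by
          rw [hT, Set.image_preimage_eq s hsurj]
      _ = sphEmb d '' T := Set.image_image _ _ _
  -- cover by hemispheres
  have hcover : T = ⋃ i : Fin d, ((T ∩ {x : Sph d | 0 < (x : Euc d) i}) ∪
      (T ∩ {x : Sph d | (x : Euc d) i < 0})) := by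
    ext x
    simp only [Set.mem_iUnion, Set.mem_union, Set.mem_inter_iff, Set.mem_setOf_eq]
    constructor
    · intro hx
      obtain ⟨i, hi⟩ := exists_coord_ne x
      rcases hi.lt_or_gt with h | h
      · exact ⟨i, Or.inr ⟨hx, h⟩⟩
      · exact ⟨i, Or.inl ⟨hx, h⟩⟩
    · rintro ⟨i, (⟨hx, _⟩ | ⟨hx, _⟩)⟩ <;> exact hx
  have hmeasCoord : ∀ i : Fin d, Measurable (fun x : Sph d => (x : Euc d) i) := by
    intro i
    exact ((EuclideanSpace.proj i).continuous.comp continuous_subtype_val).measurable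
  have hinj : ∀ (i : Fin d), Set.InjOn (sphEmb d) {x : Sph d | 0 < (x : Euc d) i} ∧
      Set.InjOn (sphEmb d) {x : Sph d | (x : Euc d) i < 0} := by
    intro i
    constructor <;>
    · intro x hx y hy hxy
      rcases sphEmb_eq_cases hxy with h | h
      · exact Subtype.ext h
      · exfalso
        have := congrArg (fun v : Euc d => v i) h
        simp only [Set.mem_setOf_eq] at hx hy
        simp only [PiLp.neg_apply] at this  -- (x) i = -(y i)
        nlinarith [hx, hy, this]
  rw [himg, hcover]
  rw [Set.image_iUnion]
  apply MeasurableSet.iUnion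
  intro i
  rw [Set.image_union]
  apply MeasurableSet.union
  · exact MeasurableSet.image_of_continuousOn_injOn
      (hpre.inter ((hmeasCoord i) measurableSet_Ioi))
      continuous_sphEmb.continuousOn ((hinj i).1.mono (Set.inter_subset_right))
  · exact MeasurableSet.image_of_continuousOn_injOn
      (hpre.inter ((hmeasCoord i) measurableSet_Iio))
      continuous_sphEmb.continuousOn ((hinj i).2.mono (Set.inter_subset_right))

/-- Finite measures on projective space with equal integrals of continuous functions agree. -/
lemma proj_measure_ext (μ ν : Measure (Proj d)) [IsFiniteMeasure μ] [IsFiniteMeasure ν]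
    (h : ∀ f : Proj d → ℝ, Continuous f → ∫ x, f x ∂μ = ∫ x, f x ∂ν) : μ = ν := by
  set e := projEmb d
  have he_meas : Measurable e := measurable_projEmb
  have hmap : Measure.map e μ = Measure.map e ν := by
    haveI : IsFiniteMeasure (Measure.map e μ) :=
      ⟨by rw [Measure.map_apply he_meas MeasurableSet.univ]; exact measure_lt_top μ _⟩
    haveI : IsFiniteMeasure (Measure.map e ν) :=
      ⟨by rw [Measure.map_apply he_meas MeasurableSet.univ]; exact measure_lt_top ν _⟩
    apply ext_of_forall_lintegral_eq_of_IsFiniteMeasure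
    intro F
    have hFc : Continuous (fun p : Proj d => ((F (e p) : ℝ))) :=
      NNReal.continuous_coe.comp (F.continuous.comp continuous_projEmb)
    obtain ⟨C, hC⟩ := F.bounded
    have hint : ∀ (κ : Measure (Proj d)) [IsFiniteMeasure κ],
        Integrable (fun p : Proj d => ((F (e p) : ℝ))) κ := by
      intro κ _
      apply Integrable.mono' (integrable_const ((F 0 : ℝ) + C))
        ((measurable_of_continuous_proj hFc).aestronglyMeasurable)
      refine Filter.Eventually.of_forall (fun p => ?_)
      rw [Real.norm_of_nonneg (F (e p)).coe_nonneg]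
      have h1 : dist (F (e p)) (F 0) ≤ C := hC _ _
      have h2 : dist ((F (e p) : ℝ)) ((F 0 : ℝ)) ≤ C := by
        rwa [NNReal.dist_eq] at h1
      have h3 : (F (e p) : ℝ) - (F 0 : ℝ) ≤ C := by
        calc (F (e p) : ℝ) - (F 0 : ℝ) ≤ |(F (e p) : ℝ) - (F 0 : ℝ)| := le_abs_self _
          _ ≤ C := h2
      linarith
    rw [lintegral_map (by exact F.continuous.measurable.coe_nnreal_ennreal) he_meas,
        lintegral_map (by exact F.continuous.measurable.coe_nnreal_ennreal) he_meas]
    rw [lintegral_coe_eq_integral _ (hint μ), lintegral_coe_eq_integral _ (hint ν)]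
    rw [h _ hFc]
  ext s hs
  have himg : MeasurableSet (e '' s) := measurableSet_projEmb_image hs
  have hpre : s = e ⁻¹' (e '' s) := (Set.preimage_image_eq s projEmb_inj).symm
  calc μ s = μ (e ⁻¹' (e '' s)) := by rw [← hpre]
    _ = (Measure.map e μ) (e '' s) := (Measure.map_apply he_meas himg).symm
    _ = (Measure.map e ν) (e '' s) := by rw [hmap]
    _ = ν (e ⁻¹' (e '' s)) := Measure.map_apply he_meas himg
    _ = ν s := by rw [← hpre]

end ProjMeas

section Besic

lemma ftc_diff' {a b : ℝ} {φ ψ : ℝ → ℝ} (hi : IntegrableOn ψ (Ioc a b) volume)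
    (hftc : ∀ t ∈ Icc a b, φ t = φ a + ∫ s in a..t, ψ s)
    {c d : ℝ} (hc : a ≤ c) (hcd : c ≤ d) (hd : d ≤ b) :
    ∫ t in c..d, ψ t = φ d - φ c := by
  have hIc : IntervalIntegrable ψ volume a c := intervalIntegrable_iff.2 (by
    rw [uIoc_of_le hc]; exact hi.mono_set (Ioc_subset_Ioc le_rfl (hcd.trans hd)))
  have hId : IntervalIntegrable ψ volume a d := intervalIntegrable_iff.2 (by
    rw [uIoc_of_le (hc.trans hcd)]; exact hi.mono_set (Ioc_subset_Ioc le_rfl hd))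
  have hkey := intervalIntegral.integral_interval_sub_left hId hIc
  rw [hftc d ⟨hc.trans hcd, hd⟩, hftc c ⟨hc, hcd.trans hd⟩, add_sub_add_left_eq_sub]
  exact hkey.symm

lemma ae_zero_of_subinterval_integral_zero {V : Type*} [NormedAddCommGroup V] [NormedSpace ℝ V]
    [CompleteSpace V] {ρ : ℝ → V} (hi : IntegrableOn ρ (Ioc (0:ℝ) 1) volume)
    (hz : ∀ c d : ℝ, 0 ≤ c → c ≤ d → d ≤ 1 → ∫ t in c..d, ρ t = 0) :
    ρ =ᵐ[volume.restrict (Ioc (0:ℝ) 1)] 0 := by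
  set ρ₀ : ℝ → V := (Ioc (0:ℝ) 1).indicator ρ with hρ₀
  have hint : Integrable ρ₀ volume := (integrable_indicator_iff measurableSet_Ioc).2 hi
  have hbes := IsUnifLocDoublingMeasure.ae_tendsto_average (μ := (volume : Measure ℝ))
      hint.locallyIntegrable 1
  have key : ∀ᵐ x ∂(volume : Measure ℝ), x ∈ Ioo (0:ℝ) 1 → ρ x = 0 := by
    filter_upwards [hbes] with x hx hmem
    have hlim : Filter.Tendsto (fun r : ℝ => ⨍ y in Metric.closedBall x r, ρ₀ y)
        (nhdsWithin 0 (Ioi 0)) (nhds (ρ₀ x)) := by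
      apply hx (fun _ => x) id Filter.tendsto_id
      refine Filter.eventually_of_mem self_mem_nhdsWithin (fun r hr => ?_)
      simp only [Metric.mem_closedBall, dist_self, id_eq, one_mul]
      have : (0:ℝ) < r := hr
      linarith
    have hev : (fun r : ℝ => ⨍ y in Metric.closedBall x r, ρ₀ y) =ᶠ[nhdsWithin (0:ℝ) (Ioi 0)]
        (fun _ => 0) := by
      have hmem' : Ioo (0:ℝ) (min x (1 - x)) ∈ nhdsWithin (0:ℝ) (Ioi 0) := by
        apply Ioo_mem_nhdsGT_of_mem
        constructor
        · exact le_refl _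
        · obtain ⟨h1, h2⟩ := hmem
          rw [lt_min_iff]
          constructor <;> linarith
      refine Filter.eventually_of_mem hmem' (fun r hr => ?_)
      obtain ⟨hr0, hrlt⟩ := hr
      have hrx : r < x := lt_of_lt_of_le hrlt (min_le_left _ _)
      have hrx' : r < 1 - x := lt_of_lt_of_le hrlt (min_le_right _ _)
      have hsub : Icc (x - r) (x + r) ⊆ Ioc (0:ℝ) 1 := by
        intro t ht
        exact ⟨by linarith [ht.1], by linarith [ht.2]⟩
      have hzero : ∫ y in Icc (x-r) (x+r), ρ₀ y = 0 := by
        rw [hρ₀, setIntegral_indicator measurableSet_Ioc,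
          inter_eq_self_of_subset_left hsub, integral_Icc_eq_integral_Ioc,
          ← intervalIntegral.integral_of_le (by linarith : x - r ≤ x + r)]
        exact hz _ _ (by linarith) (by linarith) (by linarith)
      show ⨍ y in Metric.closedBall x r, ρ₀ y = 0
      rw [setAverage_eq, Real.closedBall_eq_Icc, hzero, smul_zero]
    have h0 : Filter.Tendsto (fun r : ℝ => ⨍ y in Metric.closedBall x r, ρ₀ y)
        (nhdsWithin (0:ℝ) (Ioi 0)) (nhds 0) := Filter.Tendsto.congr' hev.symm tendsto_const_nhds
    have hval : ρ₀ x = 0 := tendsto_nhds_unique hlim h0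
    rw [hρ₀] at hval
    rw [← indicator_of_mem (Ioo_subset_Ioc_self hmem) ρ]
    exact hval
  rw [show volume.restrict (Ioc (0:ℝ) 1) = volume.restrict (Ioo (0:ℝ) 1) from
    (Measure.restrict_congr_set Ioo_ae_eq_Ioc).symm]
  rw [Filter.EventuallyEq, ae_restrict_iff' measurableSet_Ioo]
  filter_upwards [key] with x hx hmem using hx hmem

lemma ae_nonneg_deriv_of_monotoneOn {φ ψ : ℝ → ℝ} (hi : IntegrableOn ψ (Ioc (0:ℝ) 1) volume)
    (hftc : ∀ t ∈ Icc (0:ℝ) 1, φ t = φ 0 + ∫ s in (0:ℝ)..t, ψ s)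
    (hm : MonotoneOn φ (Icc (0:ℝ) 1)) :
    0 ≤ᵐ[volume.restrict (Ioc (0:ℝ) 1)] ψ := by
  set ψ₀ : ℝ → ℝ := (Ioc (0:ℝ) 1).indicator ψ with hψ₀
  have hint : Integrable ψ₀ volume := (integrable_indicator_iff measurableSet_Ioc).2 hi
  have hbes := IsUnifLocDoublingMeasure.ae_tendsto_average (μ := (volume : Measure ℝ))
      hint.locallyIntegrable 1
  have key : ∀ᵐ x ∂(volume : Measure ℝ), x ∈ Ioo (0:ℝ) 1 → 0 ≤ ψ x := by
    filter_upwards [hbes] with x hx hmem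
    have hlim : Filter.Tendsto (fun r : ℝ => ⨍ y in Metric.closedBall x r, ψ₀ y)
        (nhdsWithin 0 (Ioi 0)) (nhds (ψ₀ x)) := by
      apply hx (fun _ => x) id Filter.tendsto_id
      refine Filter.eventually_of_mem self_mem_nhdsWithin (fun r hr => ?_)
      simp only [Metric.mem_closedBall, dist_self, id_eq, one_mul]
      have : (0:ℝ) < r := hr
      linarith
    have hev : ∀ᶠ r in nhdsWithin (0:ℝ) (Ioi 0),
        0 ≤ ⨍ y in Metric.closedBall x r, ψ₀ y := by
      have hmem' : Ioo (0:ℝ) (min x (1 - x)) ∈ nhdsWithin (0:ℝ) (Ioi 0) := by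
        apply Ioo_mem_nhdsGT_of_mem
        constructor
        · exact le_refl _
        · obtain ⟨h1, h2⟩ := hmem
          rw [lt_min_iff]
          constructor <;> linarith
      refine Filter.eventually_of_mem hmem' (fun r hr => ?_)
      obtain ⟨hr0, hrlt⟩ := hr
      have hrx : r < x := lt_of_lt_of_le hrlt (min_le_left _ _)
      have hrx' : r < 1 - x := lt_of_lt_of_le hrlt (min_le_right _ _)
      have hsub : Icc (x - r) (x + r) ⊆ Ioc (0:ℝ) 1 := by
        intro t ht
        exact ⟨by linarith [ht.1], by linarith [ht.2]⟩
      have hval : ∫ y in Icc (x-r) (x+r), ψ₀ y = φ (x+r) - φ (x-r) := by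
        rw [hψ₀, setIntegral_indicator measurableSet_Ioc,
          inter_eq_self_of_subset_left hsub, integral_Icc_eq_integral_Ioc,
          ← intervalIntegral.integral_of_le (by linarith : x - r ≤ x + r)]
        exact ftc_diff' hi hftc (by linarith) (by linarith) (by linarith)
      rw [setAverage_eq, Real.closedBall_eq_Icc, hval]
      apply smul_nonneg (by positivity)
      rw [sub_nonneg]
      exact hm ⟨by linarith, by linarith⟩ ⟨by linarith, by linarith⟩ (by linarith)
    have hval : 0 ≤ ψ₀ x := ge_of_tendsto hlim hev
    rw [hψ₀, indicator_of_mem (Ioo_subset_Ioc_self hmem) ψ] at hval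
    exact hval
  rw [show volume.restrict (Ioc (0:ℝ) 1) = volume.restrict (Ioo (0:ℝ) 1) from
    (Measure.restrict_congr_set Ioo_ae_eq_Ioc).symm]
  rw [Filter.EventuallyLE, ae_restrict_iff' measurableSet_Ioo]
  filter_upwards [key] with x hx hmem using hx hmem

end Besic

section MapM

lemma mapM {a b : ℝ} (hab : a ≤ b) {φ ψ : ℝ → ℝ} (hφm : Measurable φ)
    (hψi : IntegrableOn ψ (Ioc a b) volume)
    (hftc : ∀ t ∈ Icc a b, φ t = φ a + ∫ s in a..t, ψ s)
    (hψ0 : 0 ≤ᵐ[volume.restrict (Ioc a b)] ψ) :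
    Measure.map φ ((volume.restrict (Ioc a b)).withDensity (fun t => ENNReal.ofReal (ψ t))) =
      volume.restrict (Ioc (φ a) (φ b)) := by
  have hmono : MonotoneOn φ (Icc a b) := by
    intro u hu v hv huv
    have h1 : ∫ t in u..v, ψ t = φ v - φ u := ftc_diff' hψi hftc hu.1 huv hv.2
    have h2 : 0 ≤ ∫ t in u..v, ψ t := by
      rw [intervalIntegral.integral_of_le huv]
      apply integral_nonneg_of_ae
      exact ae_restrict_of_ae_restrict_of_subset (Ioc_subset_Ioc hu.1 hv.2) hψ0
    rw [h1] at h2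
    linarith
  have hcont : ContinuousOn φ (Icc a b) := by
    have hIcc : IntegrableOn ψ (Icc a b) volume := by
      rwa [IntegrableOn, Measure.restrict_congr_set Ioc_ae_eq_Icc] at hψi
    apply ContinuousOn.congr
      (continuousOn_const.add (intervalIntegral.continuousOn_primitive hIcc))
    intro t ht
    rw [hftc t ht, intervalIntegral.integral_of_le ht.1]
    rfl
  set W := (volume.restrict (Ioc a b)).withDensity (fun t => ENNReal.ofReal (ψ t)) with hW
  have hWs : ∀ {s : Set ℝ}, MeasurableSet s → W s = ∫⁻ t in s ∩ Ioc a b, ENNReal.ofReal (ψ t) := by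
    intro s hs
    rw [hW, withDensity_apply _ hs, Measure.restrict_restrict hs]
  have hval : ∀ u v, a ≤ u → u ≤ v → v ≤ b →
      ∫⁻ t in Ioc u v, ENNReal.ofReal (ψ t) = ENNReal.ofReal (φ v - φ u) := by
    intro u v hu huv hv
    have hψuv : IntegrableOn ψ (Ioc u v) volume := hψi.mono_set (Ioc_subset_Ioc hu hv)
    rw [← ofReal_integral_eq_lintegral_ofReal hψuv
      (ae_restrict_of_ae_restrict_of_subset (Ioc_subset_Ioc hu hv) hψ0)]
    congr 1
    rw [← intervalIntegral.integral_of_le huv]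
    exact ftc_diff' hψi hftc hu huv hv
  -- the cut function
  set S : ℝ → Set ℝ := fun c => {u | u ∈ Icc a b ∧ φ u ≤ c} with hS
  set U : ℝ → ℝ := fun c => sSup (insert a (S c)) with hU
  have hSclosed : ∀ c, IsClosed (S c) := by
    intro c
    have : S c = Icc a b ∩ φ ⁻¹' (Iic c) := rfl
    rw [this]
    exact hcont.preimage_isClosed_of_isClosed isClosed_Icc isClosed_Iic
  have hbdd : ∀ c, BddAbove (insert a (S c)) := by
    intro c
    refine ⟨b, ?_⟩
    rintro x (rfl | hx)
    · exact hab
    · exact hx.1.2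
  have hne : ∀ c, (insert a (S c)).Nonempty := fun c => ⟨a, mem_insert _ _⟩
  have hUmem : ∀ c, U c ∈ insert a (S c) := by
    intro c
    apply IsClosed.csSup_mem _ (hne c) (hbdd c)
    rw [Set.insert_eq]
    exact isClosed_singleton.union (hSclosed c)
  have hUa : ∀ c, a ≤ U c := fun c => le_csSup (hbdd c) (mem_insert _ _)
  have hUb : ∀ c, U c ≤ b := by
    intro c
    apply csSup_le (hne c)
    rintro x (rfl | hx)
    · exact hab
    · exact hx.1.2
  have hP : ∀ c, φ (U c) ≤ c ∨ ∀ t ∈ Icc a b, c < φ t := by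
    intro c
    rcases hUmem c with h | h
    · by_cases hSne : (S c).Nonempty
      · obtain ⟨x, hx⟩ := hSne
        have hxle : x ≤ U c := le_csSup (hbdd c) (mem_insert_of_mem _ hx)
        rw [h] at hxle
        have hax : a ≤ x := hx.1.1
        have hxa : x = a := le_antisymm hxle hax
        left
        rw [h]
        rw [hxa] at hx
        exact hx.2
      · right
        intro t ht
        by_contra hle
        push_neg at hle
        exact hSne ⟨t, ht, hle⟩
    · exact Or.inl h.2
  have hIff : ∀ c, ∀ t ∈ Ioc a b, (φ t ≤ c ↔ t ≤ U c) := by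
    intro c t ht
    constructor
    · intro hle
      exact le_csSup (hbdd c) (mem_insert_of_mem _ ⟨⟨le_of_lt ht.1, ht.2⟩, hle⟩)
    · intro hle
      rcases hP c with h | h
      · exact le_trans (hmono ⟨le_of_lt ht.1, ht.2⟩ ⟨hUa c, hUb c⟩ hle) h
      · exfalso
        have hSempty : S c = ∅ := by
          ext x
          simp only [hS, Set.mem_setOf_eq, Set.mem_empty_iff_false, iff_false, not_and, not_le]
          exact fun hx => h x hx
        have : U c = a := by
          rw [hU]
          simp only [hSempty, insert_empty_eq]
          exact csSup_singleton a
        rw [this] at hle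
        exact absurd ht.1 (not_lt.2 hle)
  have hUval : ∀ c, φ (U c) = max (φ a) (min c (φ b)) := by
    intro c
    have hfab : φ a ≤ φ b := hmono ⟨le_rfl, hab⟩ ⟨hab, le_rfl⟩ hab
    rcases lt_or_ge c (φ a) with h | h
    · have hSempty : S c = ∅ := by
        ext x
        simp only [hS, Set.mem_setOf_eq, Set.mem_empty_iff_false, iff_false, not_and, not_le]
        intro hx
        exact lt_of_lt_of_le h (hmono ⟨le_rfl, hab⟩ hx hx.1)
      have hUca : U c = a := by
        rw [hU]
        simp only [hSempty, insert_empty_eq]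
        exact csSup_singleton a
      rw [hUca, min_eq_left (le_of_lt (lt_of_lt_of_le h hfab)), max_eq_left (le_of_lt h)]
    · rcases le_or_gt (φ b) c with h2 | h2
      · have hbS : b ∈ S c := ⟨⟨hab, le_rfl⟩, h2⟩
        have : b ≤ U c := le_csSup (hbdd c) (mem_insert_of_mem _ hbS)
        have hUcb : U c = b := le_antisymm (hUb c) this
        rw [hUcb, min_eq_right h2, max_eq_right hfab]
      · have hUle : φ (U c) ≤ c := by
          rcases hP c with h' | h'
          · exact h'
          · exact absurd (h' a ⟨le_rfl, hab⟩) (not_lt.2 h)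
        have hUltb : U c < b := by
          rcases lt_or_eq_of_le (hUb c) with h' | h'
          · exact h'
          · exfalso
            rw [h'] at hUle
            linarith
        have hge : c ≤ φ (U c) := by
          have hne2 : (nhdsWithin (U c) (Ioc (U c) b)).NeBot := by
            rw [nhdsWithin_Ioc_eq_nhdsGT hUltb]
            infer_instance
          have htend : Filter.Tendsto φ (nhdsWithin (U c) (Ioc (U c) b)) (nhds (φ (U c))) := by
            apply ContinuousWithinAt.tendsto
            apply (hcont (U c) ⟨hUa c, hUb c⟩).mono
            intro x hx
            exact ⟨le_trans (hUa c) (le_of_lt hx.1), hx.2⟩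
          apply ge_of_tendsto htend
          refine Filter.eventually_of_mem self_mem_nhdsWithin (fun t ht => ?_)
          have ht' : t ∈ Ioc a b := ⟨lt_of_le_of_lt (hUa c) ht.1, ht.2⟩
          by_contra hcl
          push_neg at hcl
          have := (hIff c t ht').1 (le_of_lt hcl)
          exact absurd this (not_le.2 ht.1)
        have heq : φ (U c) = c := le_antisymm hUle hge
        rw [heq, min_eq_left h2.le, max_eq_right h]
  have hUmono : ∀ c d : ℝ, c ≤ d → U c ≤ U d := by
    intro c d hcd
    apply csSup_le_csSup (hbdd d) (hne c)
    apply insert_subset_insert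
    intro x hx
    exact ⟨hx.1, hx.2.trans hcd⟩
  -- finiteness
  haveI hfin : IsFiniteMeasure W := by
    constructor
    rw [hWs MeasurableSet.univ, Set.univ_inter, hval a b le_rfl hab le_rfl]
    exact ENNReal.ofReal_lt_top
  haveI hfin2 : IsFiniteMeasure (Measure.map φ W) :=
    ⟨by rw [Measure.map_apply hφm MeasurableSet.univ]; exact measure_lt_top W _⟩
  apply Measure.ext_of_Ioc_finite _ _ ?_ ?_
  · rw [Measure.map_apply hφm MeasurableSet.univ, Set.preimage_univ,
      hWs MeasurableSet.univ, Set.univ_inter, hval a b le_rfl hab le_rfl,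
      Measure.restrict_apply MeasurableSet.univ, Set.univ_inter, Real.volume_Ioc]
  · intro c d hcd
    rw [Measure.map_apply hφm measurableSet_Ioc, hWs (hφm measurableSet_Ioc)]
    have hset : φ ⁻¹' (Ioc c d) ∩ Ioc a b = Ioc (U c) (U d) := by
      ext t
      simp only [mem_inter_iff, mem_preimage, mem_Ioc]
      constructor
      · rintro ⟨⟨hc1, hd1⟩, hab1⟩
        constructor
        · by_contra hle
          push_neg at hle
          have := (hIff c t ⟨hab1.1, hab1.2⟩).2 hle
          linarith
        · exact (hIff d t ⟨hab1.1, hab1.2⟩).1 hd1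
      · rintro ⟨h1, h2⟩
        have htab : t ∈ Ioc a b := ⟨lt_of_le_of_lt (hUa c) h1, h2.trans (hUb d)⟩
        refine ⟨⟨?_, (hIff d t htab).2 h2⟩, htab.1, htab.2⟩
        by_contra hle
        push_neg at hle
        have := (hIff c t htab).1 hle
        exact absurd h1 (not_lt.2 this)
    rw [hset, hval (U c) (U d) (hUa c) (hUmono c d hcd.le) (hUb d),
      Measure.restrict_apply measurableSet_Ioc, Ioc_inter_Ioc, Real.volume_Ioc,
      hUval c, hUval d]
    rcases le_or_gt (min d (φ b)) (max c (φ a)) with hle | hlt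
    · rw [ENNReal.ofReal_of_nonpos (sub_nonpos.2 hle), ENNReal.ofReal_of_nonpos]
      rw [sub_nonpos]
      rcases le_total c (φ b) with h3 | h3
      · rw [min_eq_left h3]
        apply max_le (le_max_left _ _)
        calc min d (φ b) ≤ max c (φ a) := hle
          _ = max (φ a) c := max_comm _ _
      · rw [min_eq_right h3]
        apply max_le (le_max_left _ _)
        exact (min_le_right _ _).trans (le_max_right _ _)
    · congr 1
      have hc_lt : c < min d (φ b) := lt_of_le_of_lt (le_max_left _ _) hlt
      have hφa_lt : φ a < min d (φ b) := lt_of_le_of_lt (le_max_right _ _) hlt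
      have h2 : max (φ a) (min d (φ b)) = min d (φ b) := max_eq_right hφa_lt.le
      have hcb : c < φ b := lt_of_lt_of_le hc_lt (min_le_right _ _)
      have h3 : min c (φ b) = c := min_eq_left hcb.le
      rw [h2, h3, max_comm (φ a) c]

end MapM

section Transport

lemma transport_mono {a b : ℝ} (hab : a ≤ b) {φ ψ : ℝ → ℝ} (hφm : Measurable φ)
    (hψm : Measurable ψ) (hψi : IntegrableOn ψ (Ioc a b) volume)
    (hftc : ∀ t ∈ Icc a b, φ t = φ a + ∫ s in a..t, ψ s)
    (hψ0 : 0 ≤ᵐ[volume.restrict (Ioc a b)] ψ)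
    {V : Type*} [NormedAddCommGroup V] [NormedSpace ℝ V]
    {G : ℝ → V} (hGm : StronglyMeasurable G)
    (hGi : IntegrableOn G (Ioc (φ a) (φ b)) volume) :
    IntegrableOn (fun t => ψ t • G (φ t)) (Ioc a b) volume ∧
    ∫ t in Ioc a b, ψ t • G (φ t) = ∫ x in Ioc (φ a) (φ b), G x := by
  set f : ℝ → ℝ≥0 := fun t => (ψ t).toNNReal with hf
  have hfm : Measurable f := hψm.real_toNNReal
  set W := (volume.restrict (Ioc a b)).withDensity (fun t => ENNReal.ofReal (ψ t)) with hW
  have hmap : Measure.map φ W = volume.restrict (Ioc (φ a) (φ b)) := mapM hab hφm hψi hftc hψ0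
  have hWd : W = (volume.restrict (Ioc a b)).withDensity (fun t => ((f t : ℝ≥0) : ℝ≥0∞)) := rfl
  have hG1 : Integrable G (Measure.map φ W) := by rw [hmap]; exact hGi
  have hGsm : AEStronglyMeasurable G (Measure.map φ W) := hGm.aestronglyMeasurable
  have hG2 : Integrable (G ∘ φ) W := (integrable_map_measure hGsm hφm.aemeasurable).1 hG1
  have hG3 : Integrable (fun t => f t • G (φ t)) (volume.restrict (Ioc a b)) := by
    rw [hWd] at hG2
    exact (integrable_withDensity_iff_integrable_smul₀ hfm.aemeasurable).1 hG2
  have hcongr : (fun t => f t • G (φ t)) =ᵐ[volume.restrict (Ioc a b)]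
      (fun t => ψ t • G (φ t)) := by
    filter_upwards [hψ0] with t ht
    rw [hf]
    simp only [NNReal.smul_def, Real.coe_toNNReal _ ht]
  refine ⟨hG3.congr hcongr, ?_⟩
  calc ∫ t in Ioc a b, ψ t • G (φ t) = ∫ t in Ioc a b, f t • G (φ t) :=
      (integral_congr_ae hcongr).symm
    _ = ∫ t, G (φ t) ∂W := by
        rw [hWd, integral_withDensity_eq_integral_smul₀ hfm.aemeasurable]
    _ = ∫ x, G x ∂(Measure.map φ W) := (integral_map hφm.aemeasurable hGsm).symm
    _ = ∫ x in Ioc (φ a) (φ b), G x := by rw [hmap]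

lemma transport_anti {a b : ℝ} (hab : a ≤ b) {φ ψ : ℝ → ℝ} (hφm : Measurable φ)
    (hψm : Measurable ψ) (hψi : IntegrableOn ψ (Ioc a b) volume)
    (hftc : ∀ t ∈ Icc a b, φ t = φ a + ∫ s in a..t, ψ s)
    (hψ0 : ψ ≤ᵐ[volume.restrict (Ioc a b)] 0)
    {V : Type*} [NormedAddCommGroup V] [NormedSpace ℝ V]
    {G : ℝ → V} (hGm : StronglyMeasurable G)
    (hGi : IntegrableOn G (Ioc (φ b) (φ a)) volume) :
    IntegrableOn (fun t => ψ t • G (φ t)) (Ioc a b) volume ∧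
    ∫ t in Ioc a b, ψ t • G (φ t) = - ∫ x in Ioc (φ b) (φ a), G x := by
  set r : ℝ → ℝ := fun t => a + b - t with hr
  have hrm : Measurable r := measurable_const.sub measurable_id
  have hmp : MeasurePreserving r volume volume := Measure.measurePreserving_sub_left volume (a+b)
  have hrIcc : r ⁻¹' (Icc a b) = Icc a b := by
    ext t
    simp only [hr, mem_preimage, mem_Icc]
    constructor <;> intro h <;> constructor <;> linarith [h.1, h.2]
  have hmpIcc : Measure.map r (volume.restrict (Icc a b)) = volume.restrict (Icc a b) := by
    conv_lhs => rw [← hrIcc]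
    rw [← Measure.restrict_map hrm measurableSet_Icc, hmp.map_eq]
  have hMP : MeasurePreserving r (volume.restrict (Icc a b)) (volume.restrict (Icc a b)) :=
    ⟨hrm, hmpIcc⟩
  have hra : r a = b := by rw [hr]; simp
  have hrb : r b = a := by rw [hr]; simp
  -- integrability of ψ on Icc
  have hψIcc : IntegrableOn ψ (Icc a b) volume := by
    rwa [IntegrableOn, Measure.restrict_congr_set Ioc_ae_eq_Icc] at hψi
  have hψr : IntegrableOn (fun t => ψ (r t)) (Icc a b) volume :=
    (hMP.integrable_comp hψm.aestronglyMeasurable).2 hψIcc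
  have hψ'i : IntegrableOn (fun t => -ψ (r t)) (Ioc a b) volume :=
    (hψr.mono_set Ioc_subset_Icc_self).neg
  have hψ'm : Measurable (fun t => -ψ (r t)) := (hψm.comp hrm).neg
  -- FTC for reflected function
  have hftc' : ∀ t ∈ Icc a b, φ (r t) = φ (r a) + ∫ s in a..t, -ψ (r s) := by
    intro t ht
    have h1 : ∫ s in a..t, -ψ (r s) = -(∫ x in (a+b)-t..(a+b)-a, ψ x) := by
      rw [show (fun s => -ψ (r s)) = (fun s => -ψ ((a+b) - s)) from rfl]
      rw [intervalIntegral.integral_neg, intervalIntegral.integral_comp_sub_left ψ (a+b)]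
    have hb' : a + b - a = b := by ring
    have h2 : ∫ x in (a+b)-t..(a+b)-a, ψ x = φ ((a+b)-a) - φ ((a+b)-t) :=
      ftc_diff' hψi hftc (by linarith [ht.2]) (by linarith [ht.1]) (by linarith)
    rw [hb'] at h1 h2
    rw [h1, h2, hra]
    show φ (a + b - t) = φ b + -(φ b - φ (a + b - t))
    ring
  -- sign
  have hψ'0 : 0 ≤ᵐ[volume.restrict (Ioc a b)] (fun t => -ψ (r t)) := by
    have hIcc0 : ψ ≤ᵐ[volume.restrict (Icc a b)] 0 := by
      rwa [← Measure.restrict_congr_set Ioc_ae_eq_Icc]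
    have hset : MeasurableSet {y : ℝ | ψ y ≤ 0} := measurableSet_le hψm measurable_const
    have hpull : ∀ᵐ t ∂(volume.restrict (Icc a b)), ψ (r t) ≤ 0 := by
      have := (ae_map_iff hrm.aemeasurable hset).1 (by rwa [hmpIcc] : ∀ᵐ y ∂(Measure.map r (volume.restrict (Icc a b))), ψ y ≤ 0)
      exact this
    have : ∀ᵐ t ∂(volume.restrict (Ioc a b)), ψ (r t) ≤ 0 :=
      ae_restrict_of_ae_restrict_of_subset Ioc_subset_Icc_self hpull
    filter_upwards [this] with t ht
    simp only [Pi.zero_apply]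
    linarith
  -- integrability of G
  have hGi' : IntegrableOn G (Ioc (φ (r a)) (φ (r b))) volume := by rwa [hra, hrb]
  obtain ⟨hP1, hP2⟩ := transport_mono hab (hφm.comp hrm) hψ'm hψ'i hftc' hψ'0 hGm hGi'
  simp only [Function.comp_apply] at hP1 hP2
  rw [hra, hrb] at hP2
  -- transfer back
  set F : ℝ → V := fun u => ψ u • G (φ u) with hF
  have hFsm : StronglyMeasurable F :=
    hψm.stronglyMeasurable.smul (hGm.comp_measurable hφm)
  have hFr : (fun t => (-ψ (r t)) • G (φ (r t))) = fun t => -(F (r t)) := by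
    funext t
    rw [hF, neg_smul]
  rw [hFr] at hP1 hP2
  have hFrInt : IntegrableOn (fun t => F (r t)) (Icc a b) volume := by
    have h1 : IntegrableOn (fun t => F (r t)) (Ioc a b) volume :=
      hP1.neg.congr (Filter.Eventually.of_forall fun t => by simp)
    rwa [IntegrableOn, Measure.restrict_congr_set Ioc_ae_eq_Icc] at h1
  have hFInt : IntegrableOn F (Icc a b) volume :=
    (hMP.integrable_comp hFsm.aestronglyMeasurable).1 hFrInt
  constructor
  · exact hFInt.mono_set Ioc_subset_Icc_self
  · have hIntEq : ∫ t in Icc a b, F (r t) = ∫ u in Icc a b, F u :=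
      hMP.integral_comp (Homeomorph.subLeft (a+b)).measurableEmbedding F
    have hL : ∫ t in Ioc a b, -(F (r t)) = - ∫ u in Ioc a b, F u := by
      rw [integral_neg]
      congr 1
      rw [show (volume.restrict (Ioc a b)) = (volume.restrict (Icc a b)) from
        Measure.restrict_congr_set Ioc_ae_eq_Icc, hIntEq,
        show (volume.restrict (Icc a b)) = (volume.restrict (Ioc a b)) from
        (Measure.restrict_congr_set Ioc_ae_eq_Icc).symm]
    rw [hL] at hP2
    rw [← hP2, neg_neg]

end Transport

/-- `IsACDeriv α g` : the curve `α` is absolutely continuous on `[0,1]`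
with (a.e.) derivative `g`, i.e. `α` is the indefinite integral of the
integrable function `g`. -/
def IsACDeriv {V : Type*} [NormedAddCommGroup V] [NormedSpace ℝ V]
    (α g : ℝ → V) : Prop :=
  IntervalIntegrable g volume 0 1 ∧
  ∀ t ∈ Icc (0:ℝ) 1, α t = α 0 + ∫ s in (0:ℝ)..t, g s

/-- `IsCurveMeasure g μ` : `μ` is the measure on projective space associated
(via the Riesz representation) to a curve with derivative `g`; it is the finite
Borel measure satisfying `∫ f dμ = ∫_0^1 f̂(g t) dt` for all continuous `f`. -/
def IsCurveMeasure {d : ℕ} (g : ℝ → Euc d) (μ : Measure (Proj d)) : Prop :=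
  IsFiniteMeasure μ ∧
  ∀ f : Proj d → ℝ, Continuous f → ∫ x, f x ∂μ = ∫ t in (0:ℝ)..1, hext f (g t)

/-- If `α : [0,1] → ℝ^d` is absolutely continuous and
`φ : [0,1] → [0,1]` is monotonic, absolutely continuous and surjective, then
the reparametrized curve `α ∘ φ` is absolutely continuous and produces the
same measure: `μ_{α∘φ} = μ_α`. -/
theorem stmt12 {d : ℕ} (hd : 1 ≤ d) (α g : ℝ → Euc d) (hα : IsACDeriv α g)
    (φ ψ : ℝ → ℝ) (hφac : IsACDeriv φ ψ)
    (hmono : MonotoneOn φ (Icc 0 1) ∨ AntitoneOn φ (Icc 0 1))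
    (hmaps : MapsTo φ (Icc 0 1) (Icc 0 1))
    (hsurj : SurjOn φ (Icc 0 1) (Icc 0 1)) :
    (∃ h : ℝ → Euc d, IsACDeriv (fun s => α (φ s)) h) ∧
    ∀ (h : ℝ → Euc d) (μ μ' : Measure (Proj d)),
      IsACDeriv (fun s => α (φ s)) h →
      IsCurveMeasure g μ → IsCurveMeasure h μ' → μ' = μ := by
  obtain ⟨hgI, hgFTC⟩ := hα
  obtain ⟨hψI, hφFTC⟩ := hφac
  have hgI1 : IntegrableOn g (Ioc (0:ℝ) 1) volume := hgI.1
  have hψI1 : IntegrableOn ψ (Ioc (0:ℝ) 1) volume := hψI.1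
  set μ01 := volume.restrict (Ioc (0:ℝ) 1) with hμ01
  set gm : ℝ → Euc d := hgI1.aestronglyMeasurable.mk g with hgm_def
  have hgm_sm : StronglyMeasurable gm := hgI1.aestronglyMeasurable.stronglyMeasurable_mk
  have hg_eq : g =ᵐ[μ01] gm := hgI1.aestronglyMeasurable.ae_eq_mk
  set ψm : ℝ → ℝ := hψI1.aestronglyMeasurable.mk ψ with hψm_def
  have hψm_sm : StronglyMeasurable ψm := hψI1.aestronglyMeasurable.stronglyMeasurable_mk
  have hψ_eq : ψ =ᵐ[μ01] ψm := hψI1.aestronglyMeasurable.ae_eq_mk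
  have hψm_meas : Measurable ψm := hψm_sm.measurable
  have hgm_meas : Measurable gm := hgm_sm.measurable
  have hgmI : IntegrableOn gm (Ioc (0:ℝ) 1) volume := hgI1.congr hg_eq
  have hψmI : IntegrableOn ψm (Ioc (0:ℝ) 1) volume := hψI1.congr hψ_eq
  -- clamped reparametrization
  set q : ℝ → ℝ := fun t => max 0 (min 1 t) with hq
  have hq_cont : Continuous q := continuous_const.max (continuous_const.min continuous_id)
  have hq_mem : ∀ t, q t ∈ Icc (0:ℝ) 1 :=
    fun t => ⟨le_max_left _ _, max_le zero_le_one (min_le_left _ _)⟩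
  have hq_id : ∀ t ∈ Icc (0:ℝ) 1, q t = t := by
    intro t ht
    rw [hq]
    simp only
    rw [min_eq_right ht.2, max_eq_right ht.1]
  have hφcont : ContinuousOn φ (Icc (0:ℝ) 1) := by
    have hIcc : IntegrableOn ψ (Icc (0:ℝ) 1) volume := by
      rwa [IntegrableOn, Measure.restrict_congr_set Ioc_ae_eq_Icc] at hψI1
    apply ContinuousOn.congr
      (continuousOn_const.add (intervalIntegral.continuousOn_primitive hIcc))
    intro t ht
    rw [hφFTC t ht, intervalIntegral.integral_of_le ht.1]
    rfl
  set φC : ℝ → ℝ := fun t => φ (q t) with hφC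
  have hφC_cont : Continuous φC := hφcont.comp_continuous hq_cont hq_mem
  have hφC_meas : Measurable φC := hφC_cont.measurable
  have hφC_eq : ∀ t ∈ Icc (0:ℝ) 1, φC t = φ t := by
    intro t ht
    rw [hφC]
    simp only
    rw [hq_id t ht]
  have h0mem : (0:ℝ) ∈ Icc (0:ℝ) 1 := ⟨le_rfl, zero_le_one⟩
  have h1mem : (1:ℝ) ∈ Icc (0:ℝ) 1 := ⟨zero_le_one, le_rfl⟩
  have hftcC : ∀ s : ℝ, s ∈ Icc (0:ℝ) 1 →
      ∀ t ∈ Icc (0:ℝ) s, φC t = φC 0 + ∫ u in (0:ℝ)..t, ψm u := by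
    intro s hs t ht
    have ht1 : t ∈ Icc (0:ℝ) 1 := ⟨ht.1, ht.2.trans hs.2⟩
    rw [hφC_eq t ht1, hφC_eq 0 h0mem, hφFTC t ht1]
    congr 1
    rw [intervalIntegral.integral_of_le ht.1, intervalIntegral.integral_of_le ht.1]
    exact integral_congr_ae
      (ae_restrict_of_ae_restrict_of_subset (Ioc_subset_Ioc le_rfl ht1.2) hψ_eq)
  have hφ0 : φ 0 ∈ Icc (0:ℝ) 1 := hmaps h0mem
  have hφ1 : φ 1 ∈ Icc (0:ℝ) 1 := hmaps h1mem
  -- interval integrability of g from 0 to points of [0,1]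
  have hgIto : ∀ c ∈ Icc (0:ℝ) 1, IntervalIntegrable g volume 0 c := by
    intro c hc
    exact intervalIntegrable_iff.2 (by
      rw [uIoc_of_le hc.1]
      exact hgI1.mono_set (Ioc_subset_Ioc le_rfl hc.2))
  have hαdiff : ∀ x ∈ Icc (0:ℝ) 1, ∀ y ∈ Icc (0:ℝ) 1,
      ∫ t in x..y, g t = α y - α x := by
    intro x hx y hy
    rw [hgFTC y hy, hgFTC x hx, add_sub_add_left_eq_sub]
    exact (intervalIntegral.integral_interval_sub_left (hgIto y hy) (hgIto x hx)).symm
  -- the core facts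
  have core : IntegrableOn (fun t => ψm t • gm (φC t)) (Ioc (0:ℝ) 1) volume ∧
      (∀ s ∈ Icc (0:ℝ) 1, ∫ t in Ioc (0:ℝ) s, ψm t • gm (φC t) = α (φ s) - α (φ 0)) ∧
      (∀ f : Proj d → ℝ, Continuous f →
        ∫ t in Ioc (0:ℝ) 1, hext f (ψm t • gm (φC t)) = ∫ t in Ioc (0:ℝ) 1, hext f (g t)) := by
    rcases hmono with hM | hA
    · -- monotone case
      have hψm0 : 0 ≤ᵐ[μ01] ψm := by
        have h0 : 0 ≤ᵐ[μ01] ψ := ae_nonneg_deriv_of_monotoneOn hψI1 hφFTC hM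
        filter_upwards [h0, hψ_eq] with t h1 h2
        rw [← h2]; exact h1
      have hφ00 : φ 0 = 0 := by
        obtain ⟨x, hx, hfx⟩ := hsurj h0mem
        have hle : φ 0 ≤ φ x := hM h0mem hx hx.1
        rw [hfx] at hle
        exact le_antisymm hle hφ0.1
      have hφ11 : φ 1 = 1 := by
        obtain ⟨x, hx, hfx⟩ := hsurj h1mem
        have hle : φ x ≤ φ 1 := hM hx h1mem hx.2
        rw [hfx] at hle
        exact le_antisymm hφ1.2 hle
      have key : ∀ s ∈ Icc (0:ℝ) 1,
          IntegrableOn (fun t => ψm t • gm (φC t)) (Ioc 0 s) volume ∧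
          ∫ t in Ioc (0:ℝ) s, ψm t • gm (φC t) = ∫ x in Ioc (φC 0) (φC s), gm x := by
        intro s hs
        apply transport_mono hs.1 hφC_meas hψm_meas
          (hψmI.mono_set (Ioc_subset_Ioc le_rfl hs.2)) (hftcC s hs)
          (ae_restrict_of_ae_restrict_of_subset (Ioc_subset_Ioc le_rfl hs.2) hψm0) hgm_sm
        apply hgmI.mono_set
        rw [hφC_eq 0 h0mem, hφC_eq s hs]
        exact Ioc_subset_Ioc hφ0.1 (hmaps hs).2
      refine ⟨(key 1 h1mem).1, ?_, ?_⟩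
      · intro s hs
        rw [(key s hs).2, hφC_eq 0 h0mem, hφC_eq s hs]
        have hφs : φ s ∈ Icc (0:ℝ) 1 := hmaps hs
        have hφ0s : φ 0 ≤ φ s := hM h0mem hs hs.1
        have h1 : ∫ x in Ioc (φ 0) (φ s), gm x = ∫ x in Ioc (φ 0) (φ s), g x :=
          integral_congr_ae
            (ae_restrict_of_ae_restrict_of_subset (Ioc_subset_Ioc hφ0.1 hφs.2) hg_eq.symm)
        rw [h1, ← intervalIntegral.integral_of_le hφ0s]
        exact hαdiff (φ 0) hφ0 (φ s) hφs
      · intro f hf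
        set H : ℝ → ℝ := fun y => hext f (gm y) with hH
        have hHsm : StronglyMeasurable H :=
          ((continuous_hext f hf).measurable.comp hgm_meas).stronglyMeasurable
        obtain ⟨C, hC0, hC⟩ := exists_bound f hf
        have hHI : IntegrableOn H (Ioc (0:ℝ) 1) volume := by
          apply Integrable.mono' (hgmI.norm.const_mul C) hHsm.aestronglyMeasurable
          refine Filter.Eventually.of_forall (fun y => ?_)
          rw [hH]
          simp only
          rw [Real.norm_eq_abs]
          exact hext_bound f hC0 hC (gm y)
        have hHI' : IntegrableOn H (Ioc (φC 0) (φC 1)) volume := by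
          apply hHI.mono_set
          rw [hφC_eq 0 h0mem, hφC_eq 1 h1mem, hφ00, hφ11]
        have htr := transport_mono zero_le_one hφC_meas hψm_meas hψmI
          (hftcC 1 h1mem) hψm0 hHsm hHI'
        calc ∫ t in Ioc (0:ℝ) 1, hext f (ψm t • gm (φC t))
            = ∫ t in Ioc (0:ℝ) 1, ψm t • H (φC t) := by
              apply integral_congr_ae
              filter_upwards [hψm0] with t ht
              rw [hext_smul, abs_of_nonneg ht, hH]
              simp only [smul_eq_mul]
          _ = ∫ x in Ioc (φC 0) (φC 1), H x := htr.2
          _ = ∫ x in Ioc (0:ℝ) 1, H x := by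
              rw [hφC_eq 0 h0mem, hφC_eq 1 h1mem, hφ00, hφ11]
          _ = ∫ t in Ioc (0:ℝ) 1, hext f (g t) := by
              apply integral_congr_ae
              filter_upwards [hg_eq] with t ht
              rw [hH]
              simp only
              rw [← ht]
    · -- antitone case
      have hψm0 : ψm ≤ᵐ[μ01] 0 := by
        have hnegFTC : ∀ t ∈ Icc (0:ℝ) 1,
            (fun u => -φ u) t = (fun u => -φ u) 0 + ∫ s in (0:ℝ)..t, (fun u => -ψ u) s := by
          intro t ht
          simp only
          rw [intervalIntegral.integral_neg, hφFTC t ht]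
          ring
        have hnegM : MonotoneOn (fun u => -φ u) (Icc (0:ℝ) 1) :=
          fun u hu v hv huv => neg_le_neg (hA hu hv huv)
        have h0 : 0 ≤ᵐ[μ01] (fun u => -ψ u) :=
          ae_nonneg_deriv_of_monotoneOn hψI1.neg hnegFTC hnegM
        filter_upwards [h0, hψ_eq] with t h1 h2
        simp only [Pi.zero_apply] at h1 ⊢
        rw [← h2]
        linarith
      have hφ00 : φ 0 = 1 := by
        obtain ⟨x, hx, hfx⟩ := hsurj h1mem
        have hle : φ x ≤ φ 0 := hA h0mem hx hx.1
        rw [hfx] at hle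
        exact le_antisymm hφ0.2 hle
      have hφ11 : φ 1 = 0 := by
        obtain ⟨x, hx, hfx⟩ := hsurj h0mem
        have hle : φ 1 ≤ φ x := hA hx h1mem hx.2
        rw [hfx] at hle
        exact le_antisymm hle hφ1.1
      have key : ∀ s ∈ Icc (0:ℝ) 1,
          IntegrableOn (fun t => ψm t • gm (φC t)) (Ioc 0 s) volume ∧
          ∫ t in Ioc (0:ℝ) s, ψm t • gm (φC t) = - ∫ x in Ioc (φC s) (φC 0), gm x := by
        intro s hs
        apply transport_anti hs.1 hφC_meas hψm_meas
          (hψmI.mono_set (Ioc_subset_Ioc le_rfl hs.2)) (hftcC s hs)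
          (ae_restrict_of_ae_restrict_of_subset (Ioc_subset_Ioc le_rfl hs.2) hψm0) hgm_sm
        apply hgmI.mono_set
        rw [hφC_eq 0 h0mem, hφC_eq s hs]
        exact Ioc_subset_Ioc (hmaps hs).1 hφ0.2
      refine ⟨(key 1 h1mem).1, ?_, ?_⟩
      · intro s hs
        rw [(key s hs).2, hφC_eq 0 h0mem, hφC_eq s hs]
        have hφs : φ s ∈ Icc (0:ℝ) 1 := hmaps hs
        have hφ0s : φ s ≤ φ 0 := hA h0mem hs hs.1
        have h1 : ∫ x in Ioc (φ s) (φ 0), gm x = ∫ x in Ioc (φ s) (φ 0), g x :=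
          integral_congr_ae
            (ae_restrict_of_ae_restrict_of_subset (Ioc_subset_Ioc hφs.1 hφ0.2) hg_eq.symm)
        rw [h1, ← intervalIntegral.integral_of_le hφ0s, ← intervalIntegral.integral_symm]
        exact hαdiff (φ 0) hφ0 (φ s) hφs
      · intro f hf
        set H : ℝ → ℝ := fun y => hext f (gm y) with hH
        have hHsm : StronglyMeasurable H :=
          ((continuous_hext f hf).measurable.comp hgm_meas).stronglyMeasurable
        obtain ⟨C, hC0, hC⟩ := exists_bound f hf
        have hHI : IntegrableOn H (Ioc (0:ℝ) 1) volume := by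
          apply Integrable.mono' (hgmI.norm.const_mul C) hHsm.aestronglyMeasurable
          refine Filter.Eventually.of_forall (fun y => ?_)
          rw [hH]
          simp only
          rw [Real.norm_eq_abs]
          exact hext_bound f hC0 hC (gm y)
        have hHI' : IntegrableOn H (Ioc (φC 1) (φC 0)) volume := by
          apply hHI.mono_set
          rw [hφC_eq 0 h0mem, hφC_eq 1 h1mem, hφ00, hφ11]
        have htr := transport_anti zero_le_one hφC_meas hψm_meas hψmI
          (hftcC 1 h1mem) hψm0 hHsm hHI'
        calc ∫ t in Ioc (0:ℝ) 1, hext f (ψm t • gm (φC t))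
            = ∫ t in Ioc (0:ℝ) 1, -(ψm t • H (φC t)) := by
              apply integral_congr_ae
              filter_upwards [hψm0] with t ht
              simp only [Pi.zero_apply] at ht
              rw [hext_smul, abs_of_nonpos ht, hH]
              simp only [smul_eq_mul]
              ring
          _ = - ∫ t in Ioc (0:ℝ) 1, ψm t • H (φC t) := integral_neg _
          _ = ∫ x in Ioc (φC 1) (φC 0), H x := by rw [htr.2, neg_neg]
          _ = ∫ x in Ioc (0:ℝ) 1, H x := by
              rw [hφC_eq 0 h0mem, hφC_eq 1 h1mem, hφ00, hφ11]
          _ = ∫ t in Ioc (0:ℝ) 1, hext f (g t) := by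
              apply integral_congr_ae
              filter_upwards [hg_eq] with t ht
              rw [hH]
              simp only
              rw [← ht]
  -- endgame
  obtain ⟨hh0I, hh0FTC, hh0f⟩ := core
  set h₀ : ℝ → Euc d := fun t => ψm t • gm (φC t) with hh₀
  have hh0II : IntervalIntegrable h₀ volume 0 1 :=
    ⟨hh0I, by rw [Ioc_eq_empty (not_lt.2 zero_le_one)]; exact integrableOn_empty⟩
  have hACh₀ : IsACDeriv (fun s => α (φ s)) h₀ := by
    refine ⟨hh0II, fun t ht => ?_⟩
    rw [intervalIntegral.integral_of_le ht.1, hh0FTC t ht]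
    abel
  refine ⟨⟨h₀, hACh₀⟩, ?_⟩
  intro h μ μ' hh hμ hμ'
  haveI := hμ.1
  haveI := hμ'.1
  have hhI : IntervalIntegrable h volume 0 1 := hh.1
  have hIto : ∀ (u : ℝ → Euc d), IntervalIntegrable u volume 0 1 →
      ∀ c ∈ Icc (0:ℝ) 1, IntervalIntegrable u volume 0 c := by
    intro u hu c hc
    apply hu.mono_set
    rw [uIcc_of_le hc.1, uIcc_of_le zero_le_one]
    exact Icc_subset_Icc le_rfl hc.2
  have hhint : ∀ c ∈ Icc (0:ℝ) 1, ∫ t in (0:ℝ)..c, h t = α (φ c) - α (φ 0) := by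
    intro c hc
    have h2 := hh.2 c hc
    simp only at h2
    rw [h2, add_sub_cancel_left]
  have hh0int : ∀ c ∈ Icc (0:ℝ) 1, ∫ t in (0:ℝ)..c, h₀ t = α (φ c) - α (φ 0) := by
    intro c hc
    rw [intervalIntegral.integral_of_le hc.1]
    exact hh0FTC c hc
  have hae : h =ᵐ[μ01] h₀ := by
    have hρI : IntegrableOn (fun t => h t - h₀ t) (Ioc (0:ℝ) 1) volume := hhI.1.sub hh0I
    have hsub : ∀ c d : ℝ, 0 ≤ c → c ≤ d → d ≤ 1 → ∫ t in c..d, (h t - h₀ t) = 0 := by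
      intro c d' hc hcd hd
      have hcm : c ∈ Icc (0:ℝ) 1 := ⟨hc, hcd.trans hd⟩
      have hdm : d' ∈ Icc (0:ℝ) 1 := ⟨hc.trans hcd, hd⟩
      have e1 : ∫ t in c..d', h t = (α (φ d') - α (φ 0)) - (α (φ c) - α (φ 0)) := by
        rw [← hhint d' hdm, ← hhint c hcm]
        exact (intervalIntegral.integral_interval_sub_left
          (hIto h hhI d' hdm) (hIto h hhI c hcm)).symm
      have e2 : ∫ t in c..d', h₀ t = (α (φ d') - α (φ 0)) - (α (φ c) - α (φ 0)) := by
        rw [← hh0int d' hdm, ← hh0int c hcm]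
        exact (intervalIntegral.integral_interval_sub_left
          (hIto h₀ hh0II d' hdm) (hIto h₀ hh0II c hcm)).symm
      have hsubI : ∀ (u : ℝ → Euc d), IntervalIntegrable u volume 0 1 →
          IntervalIntegrable u volume c d' := by
        intro u hu
        apply hu.mono_set
        rw [uIcc_of_le hcd, uIcc_of_le zero_le_one]
        exact Icc_subset_Icc hc hd
      rw [intervalIntegral.integral_sub (hsubI h hhI) (hsubI h₀ hh0II), e1, e2, sub_self]
    have hz := ae_zero_of_subinterval_integral_zero hρI hsub
    filter_upwards [hz] with t ht
    have : h t - h₀ t = 0 := ht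
    exact sub_eq_zero.1 this
  apply proj_measure_ext
  intro f hf
  rw [hμ'.2 f hf, hμ.2 f hf,
    intervalIntegral.integral_of_le zero_le_one, intervalIntegral.integral_of_le zero_le_one]
  have h1 : ∫ t in Ioc (0:ℝ) 1, hext f (h t) = ∫ t in Ioc (0:ℝ) 1, hext f (h₀ t) := by
    apply integral_congr_ae
    filter_upwards [hae] with t ht
    rw [ht]
  rw [h1]
  exact hh0f f hf
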